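/- Let (Ω,Σ,μ) be a σ-finite measure space and p: Ω → [1,∞) measurable with ess sup p = +∞. Then there exists a strictly increasing real sequence (p_n) with p_n → ∞ such that μ(p⁻¹([p_n, p_{n+1}))) > 0 and (1 + 1/n)^{p_n} > 2ⁿ for all n. -/

import Mathlib

open MeasureTheory Filter

noncomputable def expB (m : ℕ) : ℝ :=
  (m : ℝ) * Real.log 2 / Real.log (1 + 1 / (m : ℝ)) + 1

theorem exists_exponent_sequence_of_unbounded_p
    {Ω : Type*} [MeasurableSpace Ω] (μ : Measure Ω) [SigmaFinite μ]
    (p : Ω → ℝ) (hp : Measurable p) (hp1 : ∀ t, 1 ≤ p t)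
    (hunb : ∀ M : ℝ, 0 < μ {t | M < p t}) :
    ∃ q : ℕ → ℝ, StrictMono q ∧ Tendsto q atTop atTop ∧
      (∀ n : ℕ, 1 ≤ n → 0 < μ {t | q n ≤ p t ∧ p t < q (n + 1)}) ∧
      (∀ n : ℕ, 1 ≤ n → (2 : ℝ) ^ n < (1 + 1 / (n : ℝ)) ^ q n) := by
  have H : ∀ (m : ℕ) (a : ℝ), ∃ b : ℝ,
      a + 1 ≤ b ∧ expB m ≤ b ∧ 0 < μ {t | a ≤ p t ∧ p t < b} := by
    intro m a
    have hk : ∃ k : ℕ, 0 < μ {t | a < p t ∧ p t ≤ a + k} := by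
      by_contra hc
      push_neg at hc
      have hz : μ {t | a < p t} = 0 := by
        refine measure_mono_null ?_
          (measure_iUnion_null (s := fun k : ℕ => {t | a < p t ∧ p t ≤ a + k})
            fun k => le_antisymm (hc k) zero_le)
        intro t ht
        obtain ⟨k, hk⟩ := exists_nat_ge (p t - a)
        exact Set.mem_iUnion.mpr ⟨k, ht, by linarith⟩
      exact absurd (hunb a) (by simp [hz])
    obtain ⟨k, hk⟩ := hk
    refine ⟨max (a + k + 1) (expB m), ?_, le_max_right _ _, ?_⟩
    · have : (0:ℝ) ≤ k := Nat.cast_nonneg k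
      exact le_trans (by linarith) (le_max_left _ _)
    · refine hk.trans_le (measure_mono ?_)
      intro t ht
      have h1 := le_max_left (a + k + 1) (expB m)
      exact ⟨ht.1.le, lt_of_le_of_lt ht.2 (by linarith)⟩
  choose F hF1 hF2 hF3 using H
  set q : ℕ → ℝ := fun n => Nat.rec 0 (fun n ih => F (n + 1) ih) n with hq
  have hqsucc : ∀ n, q (n + 1) = F (n + 1) (q n) := fun n => rfl
  have hstep : ∀ n, q n + 1 ≤ q (n + 1) := fun n => by
    rw [hqsucc]; exact hF1 _ _
  have hmono : StrictMono q := strictMono_nat_of_lt_succ fun n => by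
    have := hstep n; linarith
  have hge : ∀ n : ℕ, (n : ℝ) ≤ q n := by
    intro n
    induction n with
    | zero => simp [hq]
    | succ n ih =>
      have := hstep n
      push_cast
      linarith
  have htend : Tendsto q atTop atTop :=
    tendsto_atTop_mono hge tendsto_natCast_atTop_atTop
  have hB : ∀ n, 1 ≤ n → expB n ≤ q n := by
    intro n hn
    obtain ⟨m, rfl⟩ := Nat.exists_eq_add_of_le hn
    rw [add_comm, hqsucc]
    exact hF2 _ _
  refine ⟨q, hmono, htend, fun n _ => by rw [hqsucc]; exact hF3 _ _, ?_⟩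
  intro n hn
  have hn' : (1:ℝ) ≤ n := by exact_mod_cast hn
  have hb : (1:ℝ) < 1 + 1 / n := by
    have : (0:ℝ) < 1 / n := by positivity
    linarith
  have hlog : 0 < Real.log (1 + 1 / (n:ℝ)) := Real.log_pos hb
  have hqB := hB n hn
  have key : (n:ℝ) * Real.log 2 < q n * Real.log (1 + 1 / (n:ℝ)) := by
    have hdiv : (n:ℝ) * Real.log 2 / Real.log (1 + 1 / (n:ℝ)) *
        Real.log (1 + 1 / (n:ℝ)) = (n:ℝ) * Real.log 2 :=
      div_mul_cancel₀ _ hlog.ne'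
    unfold expB at hqB
    nlinarith
  have h2 : (0:ℝ) < 2 ^ n := by positivity
  calc (2:ℝ) ^ n = Real.exp (Real.log ((2:ℝ) ^ n)) := (Real.exp_log h2).symm
    _ = Real.exp ((n:ℝ) * Real.log 2) := by rw [Real.log_pow]
    _ < Real.exp (q n * Real.log (1 + 1 / (n:ℝ))) := Real.exp_lt_exp.mpr key
    _ = (1 + 1 / (n:ℝ)) ^ q n := by
        rw [Real.rpow_def_of_pos (by linarith), mul_comm]
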